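/- Let a ≤ 0, K₁ ≤ K₂, and let b : ℝ × ℝ → ℝ satisfy −a K₁ ≤ b(t, y) ≤ −a K₂ for all (t, y). Let h > 0 with h ≤ 1/|a| (no restriction if a = 0), t_n = n h, and let (y_n)_{n ≥ 0} satisfy, for n ≥ 1, the EAB₂ recursion y_{n+1} = e^{a h} y_n + h ( φ_1(a h) b_n + φ_2(a h)(b_n − b_{n−1}) ) with b_j = b(t_j, y_j). Set C_p = e^{a h} + a h φ_2(a h). If C_p K₁ ≤ e^{a h} y_1 − h φ_2(a h) b_0 ≤ C_p K₂, then K₁ ≤ y_n ≤ K₂ for all n ≥ 2. -/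

import Mathlib

/-- The exponential propagation functions φ_j: φ_0(z) = e^z,
φ_{j+1}(z) = (φ_j(z) - 1/j!)/z for z ≠ 0, and φ_j(0) = 1/j!. -/
noncomputable def phi : ℕ → ℝ → ℝ
  | 0, z => Real.exp z
  | j + 1, z =>
      if z = 0 then 1 / (Nat.factorial (j + 1)) else (phi j z - 1 / (Nat.factorial j)) / z


lemma phi1_def {z : ℝ} (hz : z ≠ 0) : phi 1 z = (Real.exp z - 1) / z := by
  simp [phi, hz]

lemma phi2_def {z : ℝ} (hz : z ≠ 0) : phi 2 z = ((Real.exp z - 1) / z - 1) / z := by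
  simp [phi, hz]

lemma phi1_zero : phi 1 0 = 1 := by norm_num [phi]

lemma phi2_zero : phi 2 0 = 1 / 2 := by norm_num [phi]

lemma exp_eq_phi1 (z : ℝ) : Real.exp z = 1 + z * phi 1 z := by
  by_cases hz : z = 0
  · subst hz; simp [phi1_zero]
  · rw [phi1_def hz]; field_simp; ring

lemma phi1_eq_phi2 (z : ℝ) : phi 1 z = 1 + z * phi 2 z := by
  by_cases hz : z = 0
  · subst hz; simp [phi1_zero, phi2_zero]
  · rw [phi1_def hz, phi2_def hz]; field_simp; ring

lemma phi1_nonneg {z : ℝ} (hz : z ≤ 0) : 0 ≤ phi 1 z := by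
  by_cases hz0 : z = 0
  · subst hz0; rw [phi1_zero]; norm_num
  · rw [phi1_def hz0]
    have h1 : Real.exp z ≤ 1 := Real.exp_le_one_iff.mpr hz
    exact div_nonneg_iff.mpr (Or.inr ⟨by linarith, hz⟩)

lemma phi2_nonneg {z : ℝ} (hz : z ≤ 0) : 0 ≤ phi 2 z := by
  by_cases hz0 : z = 0
  · subst hz0; rw [phi2_zero]; norm_num
  · have hz2 : 0 < z ^ 2 := by positivity
    have key : z ^ 2 * phi 2 z = Real.exp z - 1 - z := by
      rw [phi2_def hz0]; field_simp
    nlinarith [Real.add_one_le_exp z]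

lemma c_nonneg {z : ℝ} (hz : z ≤ 0) (hz1 : -1 ≤ z) :
    0 ≤ Real.exp z * (phi 1 z + phi 2 z) - phi 2 z := by
  by_cases hz0 : z = 0
  · subst hz0; rw [phi1_zero, phi2_zero]; norm_num [Real.exp_zero]
  · have hz2 : 0 < z ^ 2 := by positivity
    have key : z ^ 2 * (Real.exp z * (phi 1 z + phi 2 z) - phi 2 z)
        = (z + 1) * (Real.exp z - 1) ^ 2 := by
      rw [phi1_def hz0, phi2_def hz0]; field_simp; ring
    nlinarith [mul_nonneg (by linarith : (0:ℝ) ≤ z + 1) (sq_nonneg (Real.exp z - 1))]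

/-- Preservation of the invariant region [K₁, K₂] by the EAB₂
scheme for y' = a y + b(t,y) with a ≤ 0 and −aK₁ ≤ b ≤ −aK₂, under the step
restriction h ≤ 1/|a| and a condition on the initial data. -/
theorem eab2_invariant_region (a h K₁ K₂ : ℝ) (ha : a ≤ 0) (hK : K₁ ≤ K₂)
    (hh : 0 < h) (hstep : a ≠ 0 → h ≤ 1 / |a|)
    (b : ℝ → ℝ → ℝ) (hb : ∀ t y, -a * K₁ ≤ b t y ∧ b t y ≤ -a * K₂)
    (y : ℕ → ℝ)
    (hrec : ∀ n, 1 ≤ n →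
      y (n + 1) = Real.exp (a * h) * y n
        + h * (phi 1 (a * h) * b ((n : ℝ) * h) (y n)
             + phi 2 (a * h) * (b ((n : ℝ) * h) (y n)
                 - b (((n - 1 : ℕ) : ℝ) * h) (y (n - 1)))))
    (hinit₁ : (Real.exp (a * h) + a * h * phi 2 (a * h)) * K₁
        ≤ Real.exp (a * h) * y 1 - h * phi 2 (a * h) * b 0 (y 0))
    (hinit₂ : Real.exp (a * h) * y 1 - h * phi 2 (a * h) * b 0 (y 0)
        ≤ (Real.exp (a * h) + a * h * phi 2 (a * h)) * K₂) :
    ∀ n, 2 ≤ n → K₁ ≤ y n ∧ y n ≤ K₂ := by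
  have hz : a * h ≤ 0 := mul_nonpos_iff.mpr (Or.inr ⟨ha, hh.le⟩)
  have hz1 : -1 ≤ a * h := by
    by_cases hA : a = 0
    · subst hA; norm_num
    · have ha' : a < 0 := lt_of_le_of_ne ha hA
      have h1 := hstep hA
      rw [abs_of_neg ha'] at h1
      have h2 : a * (1 / -a) ≤ a * h := mul_le_mul_of_nonpos_left h1 ha
      have h3 : a * (1 / -a) = -1 := by field_simp
      linarith
  set E := Real.exp (a * h) with hEdef
  set p1 := phi 1 (a * h) with hp1def
  set p2 := phi 2 (a * h) with hp2def
  have hE : 0 < E := Real.exp_pos _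
  have hL1 : E = 1 + a * h * p1 := exp_eq_phi1 (a * h)
  have hp1 : 0 ≤ p1 := phi1_nonneg hz
  have hp2 : 0 ≤ p2 := phi2_nonneg hz
  have hcnn : 0 ≤ E * (p1 + p2) - p2 := c_nonneg hz hz1
  have hu : ∀ n, 1 ≤ n →
      (E + a * h * p2) * K₁ ≤ E * y n - h * p2 * b (((n - 1 : ℕ) : ℝ) * h) (y (n - 1)) ∧
      E * y n - h * p2 * b (((n - 1 : ℕ) : ℝ) * h) (y (n - 1)) ≤ (E + a * h * p2) * K₂ := by
    intro n hn
    induction n, hn using Nat.le_induction with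
    | base => simp only [Nat.sub_self, Nat.cast_zero, zero_mul]; exact ⟨hinit₁, hinit₂⟩
    | succ n hn ih =>
      have hβ := hb ((n : ℝ) * h) (y n)
      have hrecn := hrec n hn
      simp only [Nat.add_sub_cancel]
      have key : E * y (n + 1) - h * p2 * b ((n : ℝ) * h) (y n)
          = E * (E * y n - h * p2 * b (((n - 1 : ℕ) : ℝ) * h) (y (n - 1)))
            + h * (E * (p1 + p2) - p2) * b ((n : ℝ) * h) (y n) := by
        linear_combination E * hrecn
      have hhc : 0 ≤ h * (E * (p1 + p2) - p2) := mul_nonneg hh.le hcnn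
      constructor
      · have s1 : E * ((E + a * h * p2) * K₁)
            ≤ E * (E * y n - h * p2 * b (((n - 1 : ℕ) : ℝ) * h) (y (n - 1))) :=
          mul_le_mul_of_nonneg_left ih.1 hE.le
        have s2 : h * (E * (p1 + p2) - p2) * (-a * K₁)
            ≤ h * (E * (p1 + p2) - p2) * b ((n : ℝ) * h) (y n) :=
          mul_le_mul_of_nonneg_left hβ.1 hhc
        have s3 : E * ((E + a * h * p2) * K₁) + h * (E * (p1 + p2) - p2) * (-a * K₁)
            = (E + a * h * p2) * K₁ := by linear_combination (E * K₁) * hL1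
        linarith
      · have s1 : E * (E * y n - h * p2 * b (((n - 1 : ℕ) : ℝ) * h) (y (n - 1)))
            ≤ E * ((E + a * h * p2) * K₂) :=
          mul_le_mul_of_nonneg_left ih.2 hE.le
        have s2 : h * (E * (p1 + p2) - p2) * b ((n : ℝ) * h) (y n)
            ≤ h * (E * (p1 + p2) - p2) * (-a * K₂) :=
          mul_le_mul_of_nonneg_left hβ.2 hhc
        have s3 : E * ((E + a * h * p2) * K₂) + h * (E * (p1 + p2) - p2) * (-a * K₂)
            = (E + a * h * p2) * K₂ := by linear_combination (E * K₂) * hL1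
        linarith
  intro n hn
  obtain ⟨m, rfl⟩ : ∃ m, n = m + 1 := ⟨n - 1, by omega⟩
  have hm : 1 ≤ m := by omega
  have ihm := hu m hm
  have hβ := hb ((m : ℝ) * h) (y m)
  have key2 : y (m + 1) = (E * y m - h * p2 * b (((m - 1 : ℕ) : ℝ) * h) (y (m - 1)))
      + h * (p1 + p2) * b ((m : ℝ) * h) (y m) := by
    linear_combination hrec m hm
  have hS : 0 ≤ h * (p1 + p2) := mul_nonneg hh.le (by linarith)
  constructor
  · have s4 : h * (p1 + p2) * (-a * K₁) ≤ h * (p1 + p2) * b ((m : ℝ) * h) (y m) :=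
      mul_le_mul_of_nonneg_left hβ.1 hS
    have s5 : (E + a * h * p2) * K₁ + h * (p1 + p2) * (-a * K₁) = K₁ := by
      linear_combination K₁ * hL1
    linarith [ihm.1]
  · have s4 : h * (p1 + p2) * b ((m : ℝ) * h) (y m) ≤ h * (p1 + p2) * (-a * K₂) :=
      mul_le_mul_of_nonneg_left hβ.2 hS
    have s5 : (E + a * h * p2) * K₂ + h * (p1 + p2) * (-a * K₂) = K₂ := by
      linear_combination K₂ * hL1
    linarith [ihm.2]
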